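/- Let δ : (0, 1/2] → [0, ∞) be a bounded function with bound M, let ε : (0, 1/2] → [0, ∞) satisfy ∫_0^{1/2} ε(ρ)² ρ^{-1} dρ < ∞, and let C > 0 and α > 0 be constants. Suppose that δ(ρ) ≤ C ( ρ^α δ(2ρ) + ε(ρ) ) for all ρ ∈ (0, 1/4]. Then ∫_0^{1/2} δ(ρ)² ρ^{-1} dρ < ∞; more precisely ∫_0^{1/4} δ(ρ)² ρ^{-1} dρ ≤ 2C² ( M²/(2α) · (1/4)^{2α} + ∫_0^{1/4} ε(ρ)² ρ^{-1} dρ ). -/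

import Mathlib

open MeasureTheory

/-- If `δ : (0,1/2] → [0,∞)` is bounded by `M`,
`∫_0^{1/2} ε(ρ)² ρ⁻¹ dρ < ∞`, and `δ(ρ) ≤ C (ρ^α δ(2ρ) + ε(ρ))` on `(0,1/4]` with
`C, α > 0`, then `∫_0^{1/2} δ(ρ)² ρ⁻¹ dρ < ∞`, and more precisely
`∫_0^{1/4} δ² ρ⁻¹ dρ ≤ 2C² (M²/(2α) (1/4)^{2α} + ∫_0^{1/4} ε² ρ⁻¹ dρ)`. -/
theorem stmt3 (δ ε : ℝ → ℝ) (C α M : ℝ) (hC : 0 < C) (hα : 0 < α)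
    (hδ0 : ∀ ρ ∈ Set.Ioc (0 : ℝ) (1/2), 0 ≤ δ ρ)
    (hδM : ∀ ρ ∈ Set.Ioc (0 : ℝ) (1/2), δ ρ ≤ M)
    (hε0 : ∀ ρ ∈ Set.Ioc (0 : ℝ) (1/2), 0 ≤ ε ρ)
    (hεint : ∫⁻ ρ in Set.Ioc (0 : ℝ) (1/2), ENNReal.ofReal ((ε ρ) ^ 2 * ρ⁻¹) < ⊤)
    (hrec : ∀ ρ ∈ Set.Ioc (0 : ℝ) (1/4), δ ρ ≤ C * (ρ ^ α * δ (2 * ρ) + ε ρ)) :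
    (∫⁻ ρ in Set.Ioc (0 : ℝ) (1/2), ENNReal.ofReal ((δ ρ) ^ 2 * ρ⁻¹) < ⊤) ∧
      ∫⁻ ρ in Set.Ioc (0 : ℝ) (1/4), ENNReal.ofReal ((δ ρ) ^ 2 * ρ⁻¹)
        ≤ ENNReal.ofReal (2 * C ^ 2) *
            (ENNReal.ofReal (M ^ 2 / (2 * α) * (1/4 : ℝ) ^ (2 * α)) +
              ∫⁻ ρ in Set.Ioc (0 : ℝ) (1/4), ENNReal.ofReal ((ε ρ) ^ 2 * ρ⁻¹)) := by
  have hM : 0 ≤ M := le_trans (hδ0 (1/2) (by norm_num)) (hδM (1/2) (by norm_num))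
  have hK0 : (0:ℝ) ≤ 2 * C ^ 2 := by positivity
  -- pointwise bound on (0, 1/4]
  have hpt : ∀ ρ ∈ Set.Ioc (0:ℝ) (1/4),
      (δ ρ)^2 * ρ⁻¹ ≤ 2 * C ^ 2 * M^2 * ρ ^ (2*α - 1) + 2 * C ^ 2 * ((ε ρ)^2 * ρ⁻¹) := by
    intro ρ hρ
    obtain ⟨hρ0, hρ4⟩ := hρ
    have hρ2 : (2*ρ) ∈ Set.Ioc (0:ℝ) (1/2) := ⟨by linarith, by linarith⟩
    have hpow : (0:ℝ) ≤ ρ ^ α := Real.rpow_nonneg hρ0.le α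
    have h1 : δ ρ ≤ C * (ρ ^ α * M + ε ρ) := by
      refine le_trans (hrec ρ ⟨hρ0, hρ4⟩) ?_
      have h2 := hδM _ hρ2
      have h3 : ρ ^ α * δ (2*ρ) ≤ ρ ^ α * M := mul_le_mul_of_nonneg_left h2 hpow
      nlinarith [hC.le]
    have hδρ : 0 ≤ δ ρ := hδ0 ρ ⟨hρ0, by linarith⟩
    have hερ : 0 ≤ ε ρ := hε0 ρ ⟨hρ0, by linarith⟩
    have hsq : (δ ρ)^2 ≤ 2 * C ^ 2 * ((ρ^α)^2 * M^2 + (ε ρ)^2) := by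
      nlinarith [sq_nonneg (ρ^α * M - ε ρ), mul_nonneg hpow hM, sq_nonneg (C * (ρ^α*M + ε ρ) - δ ρ)]
    have hsq2 : (ρ^α)^2 = ρ^(2*α) := by
      rw [← Real.rpow_natCast (ρ^α) 2, ← Real.rpow_mul hρ0.le]
      congr 1
      push_cast
      ring
    have hrpow : (ρ^α)^2 * ρ⁻¹ = ρ ^ (2*α - 1) := by
      rw [hsq2, Real.rpow_sub hρ0, Real.rpow_one, div_eq_mul_inv]
    have hinv : (0:ℝ) ≤ ρ⁻¹ := by positivity
    calc (δ ρ)^2 * ρ⁻¹ ≤ 2 * C ^ 2 * ((ρ^α)^2 * M^2 + (ε ρ)^2) * ρ⁻¹ :=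
          mul_le_mul_of_nonneg_right hsq hinv
      _ = 2 * C ^ 2 * M^2 * ((ρ^α)^2 * ρ⁻¹) + 2 * C ^ 2 * ((ε ρ)^2 * ρ⁻¹) := by ring
      _ = 2 * C ^ 2 * M^2 * ρ ^ (2*α-1) + 2 * C ^ 2 * ((ε ρ)^2 * ρ⁻¹) := by rw [hrpow]
  have hmeas1 : Measurable (fun ρ : ℝ => ENNReal.ofReal (2 * C ^ 2 * M^2 * ρ ^ (2*α-1))) := by
    fun_prop
  -- integrability and value of the rpow integral
  have hInt : IntegrableOn (fun ρ : ℝ => ρ ^ (2*α-1)) (Set.Ioc 0 (1/4)) := by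
    have h := intervalIntegral.intervalIntegrable_rpow' (a := (0:ℝ)) (b := 1/4)
      (r := 2*α-1) (by linarith)
    rwa [intervalIntegrable_iff_integrableOn_Ioc_of_le (by norm_num)] at h
  have hval : ∫ ρ in Set.Ioc (0:ℝ) (1/4), ρ ^ (2*α-1) = (1/4:ℝ)^(2*α) / (2*α) := by
    rw [← intervalIntegral.integral_of_le (by norm_num : (0:ℝ) ≤ 1/4)]
    rw [integral_rpow (Or.inl (by linarith))]
    have h2 : 2*α-1+1 = 2*α := by ring
    rw [h2, Real.zero_rpow (by linarith : 2*α ≠ 0)]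
    ring
  have hA : ∫⁻ ρ in Set.Ioc (0:ℝ) (1/4), ENNReal.ofReal (2 * C ^ 2 * M^2 * ρ^(2*α-1))
      = ENNReal.ofReal (2 * C ^ 2) * ENNReal.ofReal (M^2/(2*α)*(1/4:ℝ)^(2*α)) := by
    have h1 : ∀ ρ : ℝ, ENNReal.ofReal (2 * C ^ 2 * M^2 * ρ^(2*α-1))
        = ENNReal.ofReal (2 * C ^ 2 * M^2) * ENNReal.ofReal (ρ^(2*α-1)) := fun ρ =>
      ENNReal.ofReal_mul (by positivity)
    simp_rw [h1]
    rw [lintegral_const_mul' _ _ ENNReal.ofReal_ne_top]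
    rw [← ofReal_integral_eq_lintegral_ofReal hInt
      (ae_restrict_of_forall_mem measurableSet_Ioc
        (fun ρ hρ => Real.rpow_nonneg hρ.1.le _))]
    rw [hval, ← ENNReal.ofReal_mul (by positivity : (0:ℝ) ≤ 2 * C ^ 2 * M ^ 2),
      ← ENNReal.ofReal_mul hK0]
    congr 1
    ring
  have hB : ∫⁻ ρ in Set.Ioc (0:ℝ) (1/4), ENNReal.ofReal (2 * C ^ 2 * ((ε ρ)^2*ρ⁻¹))
      = ENNReal.ofReal (2 * C ^ 2) *
        ∫⁻ ρ in Set.Ioc (0:ℝ) (1/4), ENNReal.ofReal ((ε ρ)^2*ρ⁻¹) := by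
    simp_rw [ENNReal.ofReal_mul hK0]
    exact lintegral_const_mul' _ _ ENNReal.ofReal_ne_top
  have hmain : ∫⁻ ρ in Set.Ioc (0:ℝ) (1/4), ENNReal.ofReal ((δ ρ)^2 * ρ⁻¹)
      ≤ ENNReal.ofReal (2 * C ^ 2) *
          (ENNReal.ofReal (M^2/(2*α) * (1/4:ℝ)^(2*α)) +
            ∫⁻ ρ in Set.Ioc (0:ℝ) (1/4), ENNReal.ofReal ((ε ρ)^2 * ρ⁻¹)) := by
    have step1 : ∫⁻ ρ in Set.Ioc (0:ℝ) (1/4), ENNReal.ofReal ((δ ρ)^2 * ρ⁻¹)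
        ≤ ∫⁻ ρ in Set.Ioc (0:ℝ) (1/4),
            (ENNReal.ofReal (2 * C ^ 2 * M^2 * ρ^(2*α-1))
              + ENNReal.ofReal (2 * C ^ 2 * ((ε ρ)^2*ρ⁻¹))) := by
      refine lintegral_mono_ae ?_
      filter_upwards [ae_restrict_mem measurableSet_Ioc] with ρ hρ
      exact le_trans (ENNReal.ofReal_le_ofReal (hpt ρ hρ)) ENNReal.ofReal_add_le
    have step2 : ∫⁻ ρ in Set.Ioc (0:ℝ) (1/4),
            (ENNReal.ofReal (2 * C ^ 2 * M^2 * ρ^(2*α-1))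
              + ENNReal.ofReal (2 * C ^ 2 * ((ε ρ)^2*ρ⁻¹)))
        = (∫⁻ ρ in Set.Ioc (0:ℝ) (1/4), ENNReal.ofReal (2 * C ^ 2 * M^2 * ρ^(2*α-1)))
          + ∫⁻ ρ in Set.Ioc (0:ℝ) (1/4), ENNReal.ofReal (2 * C ^ 2 * ((ε ρ)^2*ρ⁻¹)) :=
      lintegral_add_left hmeas1 _
    rw [step2, hA, hB, ← mul_add] at step1
    exact step1
  refine ⟨?_, hmain⟩
  -- finiteness over (0, 1/2]
  have hsplit : Set.Ioc (0:ℝ) (1/2) = Set.Ioc (0:ℝ) (1/4) ∪ Set.Ioc (1/4:ℝ) (1/2) :=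
    (Set.Ioc_union_Ioc_eq_Ioc (by norm_num) (by norm_num)).symm
  rw [hsplit, lintegral_union measurableSet_Ioc (Set.Ioc_disjoint_Ioc_of_le le_rfl)]
  have hε4 : ∫⁻ ρ in Set.Ioc (0:ℝ) (1/4), ENNReal.ofReal ((ε ρ)^2 * ρ⁻¹) < ⊤ :=
    lt_of_le_of_lt (lintegral_mono_set (Set.Ioc_subset_Ioc_right (by norm_num))) hεint
  have h1 : ∫⁻ ρ in Set.Ioc (0:ℝ) (1/4), ENNReal.ofReal ((δ ρ)^2 * ρ⁻¹) < ⊤ := by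
    refine lt_of_le_of_lt hmain ?_
    exact ENNReal.mul_lt_top ENNReal.ofReal_lt_top
      (ENNReal.add_lt_top.mpr ⟨ENNReal.ofReal_lt_top, hε4⟩)
  have h2 : ∫⁻ ρ in Set.Ioc (1/4:ℝ) (1/2), ENNReal.ofReal ((δ ρ)^2 * ρ⁻¹) < ⊤ := by
    have hb : ∫⁻ ρ in Set.Ioc (1/4:ℝ) (1/2), ENNReal.ofReal ((δ ρ)^2 * ρ⁻¹)
        ≤ ∫⁻ _ρ in Set.Ioc (1/4:ℝ) (1/2), ENNReal.ofReal (4*M^2) := by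
      refine lintegral_mono_ae ?_
      filter_upwards [ae_restrict_mem measurableSet_Ioc] with ρ hρ
      apply ENNReal.ofReal_le_ofReal
      have hρ0 : (0:ℝ) < ρ := by linarith [hρ.1]
      have h0 := hδ0 ρ ⟨hρ0, hρ.2⟩
      have hM' := hδM ρ ⟨hρ0, hρ.2⟩
      have hc := mul_inv_cancel₀ hρ0.ne'
      have hinv0 : (0:ℝ) ≤ ρ⁻¹ := by positivity
      have hinv : ρ⁻¹ ≤ 4 := by nlinarith [hρ.1]
      nlinarith
    refine lt_of_le_of_lt hb ?_
    rw [setLIntegral_const]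
    exact ENNReal.mul_lt_top ENNReal.ofReal_lt_top (by simp)
  exact ENNReal.add_lt_top.mpr ⟨h1, h2⟩
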